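/- The black-hole cast map cast : DMX → MDX, sending a distribution d over X ⊔ {⊥} to ⊥ if d(⊥) > 0 and to d otherwise, satisfies the multiplicativity equation over composition of kernels: for kernels f : X → DMY and g : Y → DMZ (extended to ⊥ by g(⊥) = δ_⊥), cast applied to the composite (f;g)(x) equals the composite of cast∘f with cast∘g in the sense: cast((f;g)(x)) = ⊥ if cast(f(x)) = ⊥ or f(x) assigns positive probability to some y with cast(g(y)) = ⊥; otherwise cast((f;g)(x)) = (f;g)(x). -/

import Mathlib

open scoped NNReal Classical

/-- A kernel into distributions over `Y ⊔ {⊥}`: each value is a full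
distribution on `Option Y`. -/
def IsDMKernel {X Y : Type*} [Fintype Y] (f : X → Option Y → ℝ≥0) : Prop :=
  ∀ x, ∑ y : Option Y, f x y = 1

/-- Composition of kernels `X → DMY`, `Y → DMZ`, extending `g` to `⊥` by the
point mass at `⊥`. -/
noncomputable def dmComp {X Y Z : Type*} [Fintype Y] [Fintype Z]
    (f : X → Option Y → ℝ≥0) (g : Y → Option Z → ℝ≥0) :
    X → Option Z → ℝ≥0 := fun x z =>
  ∑ y : Option Y,
    f x y * (y.elim (fun z' => if z' = none then 1 else 0) g z)

/-- The black-hole cast `DMX → MDX`: failure if any mass lies on `⊥`,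
the distribution itself otherwise. -/
noncomputable def cast' {Y : Type*} [Fintype Y] (d : Option Y → ℝ≥0) :
    Option (Option Y → ℝ≥0) :=
  if 0 < d none then none else some d

/-- The cast map is multiplicative over composition of kernels: the cast of a
composite is failure exactly when the cast of `f x` fails or `f x` hits some
`y` whose cast of `g y` fails; otherwise it is the composite itself. -/
lemma cast'_eq_none_iff {Y : Type*} [Fintype Y] (d : Option Y → ℝ≥0) :
    cast' d = none ↔ 0 < d none := by
  unfold cast'
  split <;> simp_all

lemma dmComp_none {X Y Z : Type*} [Fintype Y] [Fintype Z]
    (f : X → Option Y → ℝ≥0) (g : Y → Option Z → ℝ≥0) (x : X) :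
    dmComp f g x none = f x none + ∑ y : Y, f x (some y) * g y none := by
  unfold dmComp
  rw [Fintype.sum_option]
  simp

theorem cast_multiplicative {X Y Z : Type*} [Fintype Y] [Fintype Z]
    (f : X → Option Y → ℝ≥0) (g : Y → Option Z → ℝ≥0)
    (hf : IsDMKernel f) (hg : IsDMKernel g) :
    ∀ x : X,
      ((cast' (f x) = none ∨ ∃ y : Y, 0 < f x (some y) ∧ cast' (g y) = none) →
        cast' (dmComp f g x) = none)
      ∧ (¬ (cast' (f x) = none ∨ ∃ y : Y, 0 < f x (some y) ∧ cast' (g y) = none) →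
        cast' (dmComp f g x) = some (dmComp f g x)) := by
  
  intro x
  have key : (cast' (dmComp f g x) = none) ↔
      (cast' (f x) = none ∨ ∃ y : Y, 0 < f x (some y) ∧ cast' (g y) = none) := by
    simp only [cast'_eq_none_iff, dmComp_none]
    constructor
    · intro h
      by_contra hc
      push_neg at hc
      obtain ⟨h1, h2⟩ := hc
      have hfn : f x none = 0 := by simpa using h1
      have hsum : ∑ y : Y, f x (some y) * g y none = 0 := by
        apply Finset.sum_eq_zero
        intro y _
        rcases eq_or_ne (f x (some y)) 0 with h0 | h0
        · simp [h0]
        · have := h2 y (pos_iff_ne_zero.mpr h0)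
          have : g y none = 0 := by simpa using this
          simp [this]
      rw [hfn, hsum] at h
      simp at h
    · rintro (h | ⟨y, hy, hgy⟩)
      · exact lt_of_lt_of_le h le_self_add
      · refine lt_of_lt_of_le (mul_pos hy hgy) ?_
        calc f x (some y) * g y none ≤ ∑ y : Y, f x (some y) * g y none :=
          Finset.single_le_sum (f := fun y => f x (some y) * g y none) (fun i _ => zero_le) (Finset.mem_univ y)
        _ ≤ _ := le_add_self
  constructor
  · exact fun h => key.mpr h
  · intro h
    have : ¬ 0 < dmComp f g x none := by
      rw [← cast'_eq_none_iff]; intro hc; exact h (key.mp hc)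
    unfold cast'
    simp [this]
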